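/- Let k ≥ 1 and let π be a permutation of {1,…,n}. If π contains no k-zigzag pattern, then T^k(π) = id. -/

import Mathlib

private theorem length_takeWhile_ne_lt {w : List ℕ} {m : ℕ} (hm : m ∈ w) :
    (w.takeWhile (· ≠ m)).length < w.length := by
  induction w with
  | nil => cases hm
  | cons a as ih =>
    by_cases ha : a = m
    · subst ha
      simp [List.takeWhile_cons]
    · rw [List.takeWhile_cons_of_pos (by simpa using ha)]
      have hm' : m ∈ as := by
        rcases List.mem_cons.mp hm with h | h
        · exact absurd h.symm ha
        · exact h
      simpa using Nat.succ_lt_succ (ih hm')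

private theorem length_tail_dropWhile_lt {w : List ℕ} (hw : w ≠ []) (p : ℕ → Bool) :
    ((w.dropWhile p).tail).length < w.length := by
  cases hd : w.dropWhile p with
  | nil => simpa using List.length_pos_iff.mpr hw
  | cons x xs =>
    have h1 : (x :: xs).length ≤ w.length := by
      rw [← hd]; exact (List.dropWhile_sublist p).length_le
    simp only [List.tail_cons]
    exact lt_of_lt_of_le (by simp) h1

/-- The classical stack sort operator on words: `S(ε) = ε` and `S(L m R) = S(L) S(R) m`,
where `m` is the largest entry of the word `L m R`. -/
def stackSort : List ℕ → List ℕ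
  | [] => []
  | a :: as =>
    let m := ((a :: as).max?).getD 0
    stackSort ((a :: as).takeWhile (· ≠ m)) ++
      stackSort (((a :: as).dropWhile (· ≠ m)).tail) ++ [m]
termination_by w => w.length
decreasing_by
  · refine length_takeWhile_ne_lt ?_
    have : (a :: as).max? = some (((a :: as).max?).getD 0) := by
      cases h : (a :: as).max? with
      | none => simp [List.max?_eq_none_iff] at h
      | some b => simp
    exact List.max?_mem this
  · exact length_tail_dropWhile_lt (by simp) _

/-- The revstack sort operator `T = S ∘ rev`. -/
def revstackSort (w : List ℕ) : List ℕ := stackSort w.reverse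

/-- The word of the identity permutation of `{1,…,n}`, namely `1 2 ⋯ n`. -/
def idPerm (n : ℕ) : List ℕ := List.range' 1 n

/-- `w` is (the word of) a permutation of `{1,…,n}`. -/
def IsPermWord (n : ℕ) (w : List ℕ) : Prop := w.Perm (idPerm n)

/-- `x` precedes `y` in the word `w`, i.e. the position of `x` is smaller than that of `y`. -/
def Precedes (w : List ℕ) (x y : ℕ) : Prop := w.idxOf x < w.idxOf y

/-- `w` contains an occurrence of the pattern `132`: values `a < b < c` occurring in
the order `a, c, b`. -/
def Contains132 (w : List ℕ) : Prop :=
  ∃ a b c, a ∈ w ∧ b ∈ w ∧ c ∈ w ∧ a < b ∧ b < c ∧ Precedes w a c ∧ Precedes w c b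

/-- `w` contains an occurrence of the pattern `2431`: values `a < b < c < d` occurring in
the order `b, d, c, a`. -/
def Contains2431 (w : List ℕ) : Prop :=
  ∃ a b c d, a ∈ w ∧ b ∈ w ∧ c ∈ w ∧ d ∈ w ∧ a < b ∧ b < c ∧ c < d ∧
    Precedes w b d ∧ Precedes w d c ∧ Precedes w c a

/-- `w` contains an occurrence of the barred pattern `241 5̄ 3`: values `a < b < c < d`
occurring in the order `b, d, a, c` with no value `e > d` lying between `a` and `c` in `w`. -/
def ContainsBarred24153 (w : List ℕ) : Prop :=
  ∃ a b c d, a ∈ w ∧ b ∈ w ∧ c ∈ w ∧ d ∈ w ∧ a < b ∧ b < c ∧ c < d ∧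
    Precedes w b d ∧ Precedes w d a ∧ Precedes w a c ∧
    ¬ ∃ e, e ∈ w ∧ d < e ∧ Precedes w a e ∧ Precedes w e c

/-- The number of descents of a word. -/
def des (w : List ℕ) : ℕ := ((w.zip w.tail).filter (fun p => p.2 < p.1)).length

/-- The finset of all words of permutations of `{1,…,n}`. -/
def permsOf (n : ℕ) : Finset (List ℕ) := (idPerm n).permutations.toFinset

/-- The finset of `t`-revstack sortable permutations of `{1,…,n}`. -/
def revstackSortable (n t : ℕ) : Finset (List ℕ) :=
  (permsOf n).filter (fun w => revstackSort^[t] w = idPerm n)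

/-- The finset of `t`-stack sortable permutations of `{1,…,n}`. -/
def stackSortable (n t : ℕ) : Finset (List ℕ) :=
  (permsOf n).filter (fun w => stackSort^[t] w = idPerm n)

/-- The descent polynomial `W(A;x) = ∑_{π ∈ A} x^{1+des(π)}` of a set of permutations. -/
noncomputable def descPoly (A : Finset (List ℕ)) : Polynomial ℚ :=
  ∑ w ∈ A, Polynomial.X ^ (1 + des w)

/-- The `m`-th Eulerian polynomial `A_m(x) = ∑_{π ∈ S_m} x^{1+des(π)}`, with `A_0(x) = 1`. -/
noncomputable def eulerianPoly (m : ℕ) : Polynomial ℚ :=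
  if m = 0 then 1 else descPoly (permsOf m)

/-- `v_t(n,i)`: the number of `t`-revstack sortable permutations of `{1,…,n}`
with exactly `i` descents. -/
def vNum (t n i : ℕ) : ℕ := ((revstackSortable n t).filter (fun w => des w = i)).card

/-- `w_t(n,i)`: the number of `t`-stack sortable permutations of `{1,…,n}`
with exactly `i` descents. -/
def wNum (t n i : ℕ) : ℕ := ((stackSortable n t).filter (fun w => des w = i)).card

/-- `z = (z 0, z 1, …, z (k+1))` is a `k`-zigzag pattern in `w`: the values are strictly
decreasing, and `w⁻¹(z (2i)) < w⁻¹(z 0) < w⁻¹(z (2i-1))` for all relevant `i ≥ 1`. -/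
def IsZigzag (w : List ℕ) (k : ℕ) (z : ℕ → ℕ) : Prop :=
  (∀ i ≤ k + 1, z i ∈ w) ∧
  (∀ i j, i < j → j ≤ k + 1 → z j < z i) ∧
  (∀ i, 1 ≤ i → 2 * i ≤ k + 1 → Precedes w (z (2 * i)) (z 0)) ∧
  (∀ i, 1 ≤ i → 2 * i - 1 ≤ k + 1 → Precedes w (z 0) (z (2 * i - 1)))

/-- A `k`-zigzag `z` in `w` is interrupted if some value `c > z 0` lies between two
even-indexed entries of `z`, or between two odd-indexed entries of `z`, in `w`. -/
def ZigzagInterrupted (w : List ℕ) (k : ℕ) (z : ℕ → ℕ) : Prop :=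
  ∃ c, c ∈ w ∧ z 0 < c ∧
    ((∃ a b, 1 ≤ a ∧ 1 ≤ b ∧ 2 * a ≤ k + 1 ∧ 2 * b ≤ k + 1 ∧
        Precedes w (z (2 * a)) c ∧ Precedes w c (z (2 * b))) ∨
     (∃ a b, 1 ≤ a ∧ 1 ≤ b ∧ 2 * a - 1 ≤ k + 1 ∧ 2 * b - 1 ≤ k + 1 ∧
        Precedes w (z (2 * a - 1)) c ∧ Precedes w c (z (2 * b - 1))))

private theorem takeWhile_append_cons {p : ℕ → Bool} {L R : List ℕ} {x : ℕ}
    (hL : ∀ a ∈ L, p a) (hx : p x = false) :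
    (L ++ x :: R).takeWhile p = L ∧ (L ++ x :: R).dropWhile p = x :: R := by
  induction L with
  | nil => simp [List.takeWhile_cons, List.dropWhile_cons, hx]
  | cons a as ih =>
    have ha : p a = true := hL a (by simp)
    have ih' := ih (fun b hb => hL b (by simp [hb]))
    simp [List.takeWhile_cons, List.dropWhile_cons, ha, ih'.1, ih'.2]

private theorem stackSort_eq (a : ℕ) (as : List ℕ) :
    stackSort (a :: as) =
      stackSort ((a :: as).takeWhile (· ≠ ((a :: as).max?).getD 0)) ++
        stackSort (((a :: as).dropWhile (· ≠ ((a :: as).max?).getD 0)).tail) ++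
        [((a :: as).max?).getD 0] := by
  rw [stackSort]

private theorem stackSort_split (L R : List ℕ) (n : ℕ)
    (hL : ∀ x ∈ L, x ≤ n) (hR : ∀ x ∈ R, x ≤ n) (hnL : n ∉ L) :
    stackSort (L ++ n :: R) = stackSort L ++ stackSort R ++ [n] := by
  have hmax : (L ++ n :: R).max? = some n := by
    rw [List.max?_eq_some_iff']
    constructor
    · simp
    · intro b hb
      rcases List.mem_append.mp hb with h | h
      · exact hL b h
      · rcases List.mem_cons.mp h with h | h
        · exact h.le
        · exact hR b h
  have htd := takeWhile_append_cons (p := fun x => decide (x ≠ n)) (L := L) (R := R) (x := n)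
    (fun a ha => by simp; exact fun h => hnL (h ▸ ha)) (by simp)
  cases hE : L ++ n :: R with
  | nil => simp at hE
  | cons a as =>
    rw [stackSort_eq]
    rw [← hE]
    rw [hmax]
    simp only [Option.getD_some]
    rw [htd.1, htd.2]
    simp
private theorem exists_max_split (w : List ℕ) (hw : w ≠ []) :
    ∃ L R n, w = L ++ n :: R ∧ n ∉ L ∧ ∀ x ∈ w, x ≤ n := by
  have hmax : w.max? = some ((w.max?).getD 0) := by
    cases h : w.max? with
    | none => rw [List.max?_eq_none_iff] at h; exact absurd h hw
    | some b => simp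
  set m := (w.max?).getD 0 with hm
  have hiff := List.max?_eq_some_iff'.mp hmax
  have hmem : m ∈ w := hiff.1
  have hle : ∀ x ∈ w, x ≤ m := hiff.2
  set p : ℕ → Bool := fun x => decide (x ≠ m) with hp
  have hsplit : w.takeWhile p ++ w.dropWhile p = w := List.takeWhile_append_dropWhile
  have hmem' : m ∈ w.dropWhile p := by
    rcases List.mem_append.mp (hsplit ▸ hmem) with h | h
    · have := List.mem_takeWhile_imp h
      simp [hp] at this
    · exact h
  have hne : w.dropWhile p ≠ [] := by intro h; rw [h] at hmem'; cases hmem'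
  have hdw : w.dropWhile p = m :: (w.dropWhile p).tail := by
    have hx : p ((w.dropWhile p).head hne) = false := List.head_dropWhile_not p hne
    have hx' : (w.dropWhile p).head hne = m := by simpa [hp] using hx
    rw [← hx']
    exact (List.cons_head_tail hne).symm
  refine ⟨w.takeWhile p, (w.dropWhile p).tail, m, ?_, ?_, hle⟩
  · rw [← hdw]; exact hsplit.symm
  · intro h
    have := List.mem_takeWhile_imp h
    simp [hp] at this

private theorem stackSort_perm (w : List ℕ) : (stackSort w).Perm w := by
  generalize hN : w.length = N
  induction N using Nat.strong_induction_on generalizing w with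
  | _ N ih =>
    cases hwe : w with
    | nil => rw [stackSort]
    | cons a as =>
      rw [← hwe]
      obtain ⟨L, R, n, hLR, hnL, hle⟩ := exists_max_split w (by rw [hwe]; simp)
      have hlen : L.length + R.length + 1 = N := by
        rw [← hN, hLR]; simp; omega
      have h1 : (stackSort L).Perm L :=
        ih L.length (by omega) L rfl
      have h2 : (stackSort R).Perm R :=
        ih R.length (by omega) R rfl
      rw [hLR, stackSort_split L R n (fun x hx => hle x (by rw [hLR]; simp [hx]))
        (fun x hx => hle x (by rw [hLR]; simp [hx])) hnL]
      refine ((h1.append h2).append (List.Perm.refl [n])).trans ?_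
      rw [List.append_assoc]
      exact List.Perm.append_left _ (List.perm_append_singleton _ _)

private theorem revstackSort_perm (w : List ℕ) : (revstackSort w).Perm w :=
  (stackSort_perm w.reverse).trans (List.reverse_perm w)

private theorem mem_revstackSort {w : List ℕ} {x : ℕ} : x ∈ revstackSort w ↔ x ∈ w :=
  (revstackSort_perm w).mem_iff

private theorem revstackSort_split (L R : List ℕ) (n : ℕ)
    (hL : ∀ x ∈ L, x ≤ n) (hR : ∀ x ∈ R, x ≤ n) (hnR : n ∉ R) :
    revstackSort (L ++ n :: R) = revstackSort R ++ revstackSort L ++ [n] := by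
  unfold revstackSort
  rw [show (L ++ n :: R).reverse = R.reverse ++ n :: L.reverse by
    rw [List.reverse_append]; simp]
  exact stackSort_split _ _ _ (fun x hx => hR x (List.mem_reverse.mp hx))
    (fun x hx => hL x (List.mem_reverse.mp hx)) (fun h => hnR (List.mem_reverse.mp h))
private theorem precedes_append_left {A B : List ℕ} {x y : ℕ} (hx : x ∈ A) (hy : y ∈ A) :
    Precedes (A ++ B) x y ↔ Precedes A x y := by
  unfold Precedes
  rw [List.idxOf_append_of_mem hx, List.idxOf_append_of_mem hy]

private theorem precedes_append_right {A B : List ℕ} {x y : ℕ} (hx : x ∉ A) (hy : y ∉ A) :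
    Precedes (A ++ B) x y ↔ Precedes B x y := by
  unfold Precedes
  rw [List.idxOf_append_of_notMem hx, List.idxOf_append_of_notMem hy]
  omega

private theorem precedes_of_mem_not_mem {A B : List ℕ} {x y : ℕ} (hx : x ∈ A) (hy : y ∉ A) :
    Precedes (A ++ B) x y := by
  unfold Precedes
  rw [List.idxOf_append_of_mem hx, List.idxOf_append_of_notMem hy]
  have := List.idxOf_lt_length_iff.mpr hx
  omega

/-- index of a member of `L` inside `L ++ n :: R`. -/
private theorem idx_left {L R : List ℕ} {n x : ℕ} (hx : x ∈ L) :
    List.idxOf x (L ++ n :: R) = List.idxOf x L :=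
  List.idxOf_append_of_mem hx

private theorem idx_mid {L R : List ℕ} {n : ℕ} (hn : n ∉ L) :
    List.idxOf n (L ++ n :: R) = L.length := by
  rw [List.idxOf_append_of_notMem hn, List.idxOf_cons_self]
  omega

private theorem idx_right {L R : List ℕ} {n x : ℕ} (hxL : x ∉ L) (hxn : x ≠ n) :
    List.idxOf x (L ++ n :: R) = L.length + 1 + List.idxOf x R := by
  rw [List.idxOf_append_of_notMem hxL, List.idxOf_cons_ne _ (Ne.symm hxn)]
  omega

private theorem rev_order_aux (N : ℕ) : ∀ (w : List ℕ), w.length ≤ N → w.Nodup →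
    ∀ v z, v ∈ w → z ∈ w → z < v →
    (Precedes (revstackSort w) v z ↔
      Precedes w z v ∧ ∃ c, c ∈ w ∧ v < c ∧ Precedes w z c ∧ Precedes w c v) := by
  induction N with
  | zero =>
    intro w hw _ v z hv _ _
    rw [List.length_eq_zero_iff.mp (Nat.le_zero.mp hw)] at hv
    cases hv
  | succ N ih =>
    intro w hwN hnd v z hv hz hzv
    obtain ⟨L, R, n, hLR, hnL, hle⟩ := exists_max_split w (by rintro rfl; cases hv)
    subst hLR
    -- nodup facts
    have hndL : L.Nodup := (List.nodup_append'.mp hnd).1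
    have hndnR : (n :: R).Nodup := (List.nodup_append'.mp hnd).2.1
    have hdisj : L.Disjoint (n :: R) := (List.nodup_append'.mp hnd).2.2
    have hndR : R.Nodup := (List.nodup_cons.mp hndnR).2
    have hnR : n ∉ R := (List.nodup_cons.mp hndnR).1
    have hlenL : L.length ≤ N := by
      have := hwN; simp at this; omega
    have hlenR : R.length ≤ N := by
      have := hwN; simp at this; omega
    have hsplit := revstackSort_split L R n
      (fun x hx => hle x (by simp [hx])) (fun x hx => hle x (by simp [hx])) hnR
    have hlTR : (revstackSort R).length = R.length := (revstackSort_perm R).length_eq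
    have hlTL : (revstackSort L).length = L.length := (revstackSort_perm L).length_eq
    have hmemTL : ∀ {x : ℕ}, x ∈ revstackSort L ↔ x ∈ L := fun {x} => mem_revstackSort
    have hmemTR : ∀ {x : ℕ}, x ∈ revstackSort R ↔ x ∈ R := fun {x} => mem_revstackSort
    -- locate v and z
    have hvn : v ≤ n := hle v hv
    have hzn : z < n := lt_of_lt_of_le hzv hvn
    have hzLR : z ∈ L ∨ z ∈ R := by
      rcases List.mem_append.mp hz with h | h
      · exact Or.inl h
      · rcases List.mem_cons.mp h with h | h
        · omega
        · exact Or.inr h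
    by_cases hveq : v = n
    · -- v = n : both sides false
      subst hveq
      constructor
      · intro hP
        exfalso
        unfold Precedes at hP
        rw [hsplit] at hP
        have hidxv : List.idxOf v (revstackSort R ++ revstackSort L ++ [v]) =
            (revstackSort R).length + (revstackSort L).length := by
          rw [List.append_assoc, List.idxOf_append_of_notMem, List.idxOf_append_of_notMem]
          · simp
          · intro h; exact hnL (hmemTL.mp h)
          · intro h; exact hnR (hmemTR.mp h)
        have hzmem : z ∈ revstackSort R ++ revstackSort L := by
          rcases hzLR with h | h
          · exact List.mem_append.mpr (Or.inr (hmemTL.mpr h))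
          · exact List.mem_append.mpr (Or.inl (hmemTR.mpr h))
        have hidxz : List.idxOf z (revstackSort R ++ revstackSort L ++ [v]) <
            (revstackSort R).length + (revstackSort L).length := by
          rw [List.idxOf_append_of_mem hzmem]
          have := List.idxOf_lt_length_iff.mpr hzmem
          simpa using this
        omega
      · rintro ⟨-, c, hc, hvc, -, -⟩
        exact absurd (hle c hc) (by omega)
    have hvn' : v < n := lt_of_le_of_ne hvn hveq
    have hvLR : v ∈ L ∨ v ∈ R := by
      rcases List.mem_append.mp hv with h | h
      · exact Or.inl h
      · rcases List.mem_cons.mp h with h | h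
        · omega
        · exact Or.inr h
    rcases hvLR with hvL | hvR <;> rcases hzLR with hzL | hzR
    · -- v ∈ L, z ∈ L
      have hvTR : v ∉ revstackSort R := fun h => hdisj hvL (by simp [hmemTR.mp h])
      have hzTR : z ∉ revstackSort R := fun h => hdisj hzL (by simp [hmemTR.mp h])
      have hLHS : Precedes (revstackSort (L ++ n :: R)) v z ↔ Precedes (revstackSort L) v z := by
        rw [hsplit, List.append_assoc, precedes_append_right hvTR hzTR,
          precedes_append_left (hmemTL.mpr hvL) (hmemTL.mpr hzL)]
      rw [hLHS, ih L hlenL hndL v z hvL hzL hzv]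
      constructor
      · rintro ⟨h1, c, hc, hvc, h2, h3⟩
        refine ⟨?_, c, by simp [hc], hvc, ?_, ?_⟩
        · unfold Precedes at *; rw [idx_left hzL, idx_left hvL]; exact h1
        · unfold Precedes at *; rw [idx_left hzL, idx_left hc]; exact h2
        · unfold Precedes at *; rw [idx_left hc, idx_left hvL]; exact h3
      · rintro ⟨h1, c, hc, hvc, h2, h3⟩
        have hidxv : List.idxOf v (L ++ n :: R) < L.length := by
          rw [idx_left hvL]; exact List.idxOf_lt_length_iff.mpr hvL
        have hcL : c ∈ L := by
          by_contra hcL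
          have hcn : c ≠ n := by
            intro h; subst h
            unfold Precedes at h3
            rw [idx_mid hnL] at h3
            omega
          unfold Precedes at h3
          rw [idx_right hcL hcn] at h3
          omega
        refine ⟨?_, c, hcL, hvc, ?_, ?_⟩
        · unfold Precedes at *; rw [idx_left hzL, idx_left hvL] at h1; exact h1
        · unfold Precedes at *; rw [idx_left hzL, idx_left hcL] at h2; exact h2
        · unfold Precedes at *; rw [idx_left hcL, idx_left hvL] at h3; exact h3
    · -- v ∈ L, z ∈ R : both sides false
      have hzL : z ∉ L := fun h => hdisj h (by simp [hzR])
      have hzn' : z ≠ n := by omega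
      constructor
      · intro hP
        exfalso
        unfold Precedes at hP
        rw [hsplit] at hP
        have h1 : List.idxOf z (revstackSort R ++ revstackSort L ++ [n]) < R.length := by
          rw [List.append_assoc, List.idxOf_append_of_mem (hmemTR.mpr hzR), ← hlTR]
          exact List.idxOf_lt_length_iff.mpr (hmemTR.mpr hzR)
        have hvTR : v ∉ revstackSort R := fun h => hdisj hvL (by simp [hmemTR.mp h])
        have h2 : R.length ≤ List.idxOf v (revstackSort R ++ revstackSort L ++ [n]) := by
          rw [List.append_assoc, List.idxOf_append_of_notMem hvTR, hlTR]
          omega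
        omega
      · rintro ⟨h1, -⟩
        unfold Precedes at h1
        rw [idx_right hzL hzn', idx_left hvL] at h1
        have := List.idxOf_lt_length_iff.mpr hvL
        omega
    · -- v ∈ R, z ∈ L : both sides true
      have hvL : v ∉ L := fun h => hdisj h (by simp [hvR])
      have hvn'' : v ≠ n := hveq
      have hLHS : Precedes (revstackSort (L ++ n :: R)) v z := by
        rw [hsplit, List.append_assoc]
        exact precedes_of_mem_not_mem (hmemTR.mpr hvR)
          (fun h => hdisj hzL (by simp [hmemTR.mp h]))
      rw [iff_true_intro hLHS, true_iff]
      have hidxz := List.idxOf_lt_length_iff.mpr hzL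
      refine ⟨?_, n, by simp, hvn', ?_, ?_⟩ <;> unfold Precedes
      · rw [idx_left hzL, idx_right hvL hvn'']
        omega
      · rw [idx_left hzL, idx_mid hnL]
        omega
      · rw [idx_mid hnL, idx_right hvL hvn'']
        omega
    · -- v ∈ R, z ∈ R
      have hvL : v ∉ L := fun h => hdisj h (by simp [hvR])
      have hzL : z ∉ L := fun h => hdisj h (by simp [hzR])
      have hvn'' : v ≠ n := hveq
      have hzn' : z ≠ n := by omega
      have hLHS : Precedes (revstackSort (L ++ n :: R)) v z ↔ Precedes (revstackSort R) v z := by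
        rw [hsplit, List.append_assoc,
          precedes_append_left (hmemTR.mpr hvR) (hmemTR.mpr hzR)]
      rw [hLHS, ih R hlenR hndR v z hvR hzR hzv]
      constructor
      · rintro ⟨h1, c, hc, hvc, h2, h3⟩
        have hcL : c ∉ L := fun h => hdisj h (by simp [hc])
        have hcn : c ≠ n := by
          intro h; subst h; exact hnR hc
        refine ⟨?_, c, by simp [hc], hvc, ?_, ?_⟩ <;> unfold Precedes at *
        · rw [idx_right hzL hzn', idx_right hvL hvn'']
          omega
        · rw [idx_right hzL hzn', idx_right hcL hcn]
          omega
        · rw [idx_right hcL hcn, idx_right hvL hvn'']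
          omega
      · rintro ⟨h1, c, hc, hvc, h2, h3⟩
        have hidxz : L.length + 1 ≤ List.idxOf z (L ++ n :: R) := by
          rw [idx_right hzL hzn']; omega
        have hcR : c ∈ R := by
          rcases List.mem_append.mp hc with h | h
          · exfalso
            unfold Precedes at h2
            rw [idx_left h] at h2
            have := List.idxOf_lt_length_iff.mpr h
            omega
          · rcases List.mem_cons.mp h with h | h
            · exfalso
              subst h
              unfold Precedes at h2
              rw [idx_mid hnL] at h2
              omega
            · exact h
        have hcL : c ∉ L := fun h => hdisj h (by simp [hcR])
        have hcn : c ≠ n := by intro h; subst h; exact hnR hcR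
        refine ⟨?_, c, hcR, hvc, ?_, ?_⟩ <;> unfold Precedes at *
        · rw [idx_right hzL hzn', idx_right hvL hvn''] at h1
          omega
        · rw [idx_right hzL hzn', idx_right hcL hcn] at h2
          omega
        · rw [idx_right hcL hcn, idx_right hvL hvn''] at h3
          omega

private theorem rev_order {w : List ℕ} (hnd : w.Nodup) {v z : ℕ}
    (hv : v ∈ w) (hz : z ∈ w) (hzv : z < v) :
    Precedes (revstackSort w) v z ↔
      Precedes w z v ∧ ∃ c, c ∈ w ∧ v < c ∧ Precedes w z c ∧ Precedes w c v :=
  rev_order_aux w.length w le_rfl hnd v z hv hz hzv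
private theorem zigzag_step (w : List ℕ) (hnd : w.Nodup) (k : ℕ)
    (h : ∃ z : ℕ → ℕ, IsZigzag (revstackSort w) k z) :
    ∃ z : ℕ → ℕ, IsZigzag w (k + 1) z := by
  obtain ⟨z, hmem, hdec, heven, hodd⟩ := h
  set v := z 0 with hv
  have hvw : v ∈ w := mem_revstackSort.mp (hmem 0 (by omega))
  have hy1T : z 1 ∈ revstackSort w := hmem 1 (by omega)
  have hy1 : z 1 ∈ w := mem_revstackSort.mp hy1T
  have hy1v : z 1 < v := hdec 0 1 (by omega) (by omega)
  have hP1 : Precedes (revstackSort w) v (z 1) := hodd 1 le_rfl (by omega)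
  obtain ⟨hzv1, c1, hc1w, hvc1, _, hc1v⟩ := (rev_order hnd hvw hy1 hy1v).mp hP1
  -- pick the rightmost element > v occurring before v in w
  set l := w.filter (fun x => decide (v < x) && decide (w.idxOf x < w.idxOf v)) with hl
  have hc1l : c1 ∈ l := by
    rw [hl, List.mem_filter]
    exact ⟨hc1w, by simp [hvc1]; exact hc1v⟩
  have hlne : l.argmax (fun x => w.idxOf x) ≠ none := by
    intro hnone
    rw [List.argmax_eq_none] at hnone
    rw [hnone] at hc1l
    cases hc1l
  obtain ⟨c, hc⟩ := Option.ne_none_iff_exists'.mp hlne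
  have hcl : c ∈ l := List.argmax_mem hc
  have hcmax : ∀ x ∈ l, w.idxOf x ≤ w.idxOf c := fun x hx => List.le_of_mem_argmax hx hc
  have hcw : c ∈ w := (List.mem_filter.mp hcl).1
  have hcprop := (List.mem_filter.mp hcl).2
  simp only [Bool.and_eq_true, decide_eq_true_eq] at hcprop
  have hvc : v < c := hcprop.1
  have hcv : Precedes w c v := hcprop.2
  -- the new zigzag
  refine ⟨fun i => if i = 0 then c else if i = 1 then v else z (i - 1), ?_, ?_, ?_, ?_⟩
  · intro i hi
    by_cases h0 : i = 0
    · simp [h0, hcw]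
    by_cases h1 : i = 1
    · simp [h0, h1, hvw]
    simp only [h0, h1, if_false]
    exact mem_revstackSort.mp (hmem (i - 1) (by omega))
  · intro i j hij hj
    by_cases hi0 : i = 0
    · subst hi0
      by_cases hj1 : j = 1
      · simpa [hj1] using hvc
      · have hj2 : 2 ≤ j := by omega
        have : z (j - 1) < z 0 := hdec 0 (j - 1) (by omega) (by omega)
        simp only [if_neg (by omega : j ≠ 0), if_neg hj1, if_pos rfl, if_true, eq_self_iff_true]
        omega
    by_cases hi1 : i = 1
    · subst hi1
      have hj2 : 2 ≤ j := by omega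
      have : z (j - 1) < z 0 := hdec 0 (j - 1) (by omega) (by omega)
      simp only [if_neg (by omega : j ≠ 0), if_neg (by omega : j ≠ 1),
        if_neg (by omega : (1 : ℕ) ≠ 0), if_pos rfl, if_true, eq_self_iff_true]
      omega
    · have hi2 : 2 ≤ i := by omega
      have : z (j - 1) < z (i - 1) := hdec (i - 1) (j - 1) (by omega) (by omega)
      simp only [if_neg (by omega : j ≠ 0), if_neg (by omega : j ≠ 1), if_neg hi0, if_neg hi1]
      exact this
  · -- even entries precede c
    intro i hi h2i
    simp only [if_neg (by omega : 2 * i ≠ 0), if_neg (by omega : 2 * i ≠ 1), if_pos rfl, if_true, eq_self_iff_true]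
    set y := z (2 * i - 1) with hy
    have hyT : y ∈ revstackSort w := hmem (2 * i - 1) (by omega)
    have hyw : y ∈ w := mem_revstackSort.mp hyT
    have hyv : y < v := hdec 0 (2 * i - 1) (by omega) (by omega)
    have hPy : Precedes (revstackSort w) v y := hodd i hi (by omega)
    obtain ⟨hyvw, c', hc'w, hvc', hyc', hc'v⟩ := (rev_order hnd hvw hyw hyv).mp hPy
    have hc'l : c' ∈ l := by
      rw [hl, List.mem_filter]
      exact ⟨hc'w, by simp [hvc']; exact hc'v⟩
    have := hcmax c' hc'l
    unfold Precedes at *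
    omega
  · -- c precedes odd entries
    intro i hi h2i
    by_cases hi1 : i = 1
    · simpa [hi1] using hcv
    have hi2 : 2 ≤ i := by omega
    simp only [if_neg (by omega : 2 * i - 1 ≠ 0), if_neg (by omega : 2 * i - 1 ≠ 1),
      if_pos rfl, if_true, eq_self_iff_true]
    have harith : 2 * i - 1 - 1 = 2 * (i - 1) := by omega
    rw [harith]
    set y := z (2 * (i - 1)) with hy
    have hyT : y ∈ revstackSort w := hmem (2 * (i - 1)) (by omega)
    have hyw : y ∈ w := mem_revstackSort.mp hyT
    have hyv : y < v := hdec 0 (2 * (i - 1)) (by omega) (by omega)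
    have hPy : Precedes (revstackSort w) y v := heven (i - 1) (by omega) (by omega)
    -- suppose y were before c in w; then v before y in revstackSort w, contradiction
    by_contra hnc
    have hyc : w.idxOf y < w.idxOf c := by
      have hne : y ≠ c := by omega
      have := (List.idxOf_inj (y := c) hyw).not.mpr hne
      unfold Precedes at hnc
      omega
    have hrev : Precedes (revstackSort w) v y := by
      rw [rev_order hnd hvw hyw hyv]
      refine ⟨?_, c, hcw, hvc, ?_, hcv⟩ <;> unfold Precedes at *
      · omega
      · exact hyc
    unfold Precedes at hPy hrev
    omega

private theorem idPerm_nodup (n : ℕ) : (idPerm n).Nodup := List.nodup_range' (s := 1) (n := n)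

private theorem no_zigzag_zero (n : ℕ) (π : List ℕ) (hπ : IsPermWord n π)
    (h : ¬ ∃ z : ℕ → ℕ, IsZigzag π 0 z) : π = idPerm n := by
  have hnd : π.Nodup := hπ.nodup_iff.mpr (idPerm_nodup n)
  have hsorted : List.Pairwise (· ≤ ·) π := by
    rw [List.pairwise_iff_getElem]
    intro i j hi hj hij
    by_contra hlt
    push_neg at hlt
    apply h
    refine ⟨fun t => if t = 0 then π[i] else π[j], ?_, ?_, ?_, ?_⟩
    · intro t _
      by_cases ht : t = 0 <;> simp [ht, List.getElem_mem]
    · intro a b hab hb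
      have ha : a = 0 := by omega
      have hb1 : b = 1 := by omega
      simpa [ha, hb1] using hlt
    · intro a ha h2a
      omega
    · intro a ha h2a
      have ha1 : a = 1 := by omega
      subst ha1
      simp only [Nat.mul_one, if_pos rfl, if_true, eq_self_iff_true, if_neg (by omega : 2 * 1 - 1 ≠ 0)]
      unfold Precedes
      rw [List.Nodup.idxOf_getElem hnd i hi, List.Nodup.idxOf_getElem hnd j hj]
      exact hij
  have hsorted' : List.Pairwise (· ≤ ·) (idPerm n) :=
    ((List.pairwise_lt_range' (s := 1) (n := n)).imp fun h => le_of_lt h)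
  exact List.Perm.eq_of_pairwise' hsorted hsorted' hπ

theorem no_zigzag_implies_sorted
    (k : ℕ) (hk : 1 ≤ k) (n : ℕ) (π : List ℕ) (hπ : IsPermWord n π)
    (h : ¬ ∃ z : ℕ → ℕ, IsZigzag π k z) :
    revstackSort^[k] π = idPerm n := by
  clear hk
  
  induction k generalizing π with
  | zero => exact no_zigzag_zero n π hπ h
  | succ k ih =>
    have hnd : π.Nodup := hπ.nodup_iff.mpr (idPerm_nodup n)
    have h2 : ¬ ∃ z : ℕ → ℕ, IsZigzag (revstackSort π) k z :=
      fun hz => h (zigzag_step π hnd k hz)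
    have hπ' : IsPermWord n (revstackSort π) := (revstackSort_perm π).trans hπ
    rw [Function.iterate_succ_apply]
    exact ih (revstackSort π) hπ' h2
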